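/- Let X be a random walk with i.i.d. increments of tilted law P̃_x for x in a compact interval [x_1, x_2] ⊂ (0, β/2). Then there exists r̃ > 0 such that 0 ≤ P̃_x(X_i > 0 for 1 ≤ i ≤ k) - κ(x) ≤ Σ_{j>k} e^{-r̃ j} for all x ∈ [x_1,x_2], so P̃_x(X_{[1,k]} > 0) converges to κ(x) as k → ∞ uniformly in x; consequently x ↦ κ(x) is continuous on (0, β/2). -/

import Mathlib

open MeasureTheory ProbabilityTheory Set Filter
open scoped ENNReal

lemma aux_summable_exp {t : ℝ} (ht : t < 0) :
    Summable fun k : ℤ => Real.exp (t * |(k : ℝ)|) := by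
  have hgeo : Summable fun n : ℕ => Real.exp t ^ n :=
    summable_geometric_of_lt_one (Real.exp_pos t).le (Real.exp_lt_one_iff.mpr ht)
  apply Summable.of_nat_of_neg
  · refine hgeo.congr fun n => ?_
    rw [← Real.exp_nat_mul]
    congr 1
    push_cast
    rw [abs_of_nonneg (Nat.cast_nonneg n)]
    ring
  · refine hgeo.congr fun n => ?_
    rw [← Real.exp_nat_mul]
    congr 1
    push_cast
    rw [abs_neg, abs_of_nonneg (Nat.cast_nonneg n)]
    ring

lemma aux_summable {a b : ℝ} (c : ℝ) (hab : |a| < b) :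
    Summable fun k : ℤ => Real.exp (a * k) * Real.exp (-(b) * |(k : ℝ)|) / c := by
  apply Summable.div_const
  refine Summable.of_nonneg_of_le (fun k => by positivity) (fun k => ?_)
    (aux_summable_exp (t := |a| - b) (by linarith))
  rw [← Real.exp_add]
  apply Real.exp_le_exp.mpr
  have : a * k ≤ |a| * |(k : ℝ)| := le_trans (le_abs_self _) (by rw [abs_mul])
  nlinarith [abs_nonneg (k : ℝ)]

lemma aux_pos {a b c : ℝ} (hab : |a| < b) (hc : 0 < c) :
    0 < ∑' k : ℤ, Real.exp (a * k) * Real.exp (-b * |(k : ℝ)|) / c := by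
  refine Summable.tsum_pos (aux_summable c hab) (fun k => by positivity) 0 ?_
  norm_num
  positivity

lemma aux_neg (a b c : ℝ) :
    (∑' k : ℤ, Real.exp (-a * k) * Real.exp (-b * |(k : ℝ)|) / c)
      = ∑' k : ℤ, Real.exp (a * k) * Real.exp (-b * |(k : ℝ)|) / c := by
  rw [← (Equiv.neg ℤ).tsum_eq (fun k : ℤ => Real.exp (a * k) * Real.exp (-b * |(k : ℝ)|) / c)]
  refine tsum_congr fun k => ?_
  simp only [Equiv.neg_apply, Int.cast_neg, abs_neg, mul_neg, neg_mul]

lemma aux_strict_mono {a₁ a₂ b c : ℝ} (h0 : 0 ≤ a₁) (h12 : a₁ < a₂) (h2b : a₂ < b)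
    (hc : 0 < c) :
    (∑' k : ℤ, Real.exp (a₁ * k) * Real.exp (-b * |(k : ℝ)|) / c)
      < ∑' k : ℤ, Real.exp (a₂ * k) * Real.exp (-b * |(k : ℝ)|) / c := by
  have e1 : |a₁| < b := by rw [abs_of_nonneg h0]; linarith
  have e2 : |a₂| < b := by rw [abs_of_nonneg (by linarith)]; linarith
  have habs : |a₁| < |a₂| := by
    rw [abs_of_nonneg h0, abs_of_nonneg (by linarith)]; exact h12
  have key : ∀ a : ℝ, |a| < b →
      2 * (∑' k : ℤ, Real.exp (a * k) * Real.exp (-b * |(k : ℝ)|) / c)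
        = ∑' k : ℤ, 2 * Real.cosh (a * k) * (Real.exp (-b * |(k : ℝ)|) / c) := by
    intro a ha
    have h₁ := aux_summable (a := a) (b := b) c ha
    have h₂ := aux_summable (a := -a) (b := b) c (by rwa [abs_neg])
    have step : 2 * (∑' k : ℤ, Real.exp (a * k) * Real.exp (-b * |(k : ℝ)|) / c)
        = (∑' k : ℤ, Real.exp (-a * k) * Real.exp (-b * |(k : ℝ)|) / c)
          + ∑' k : ℤ, Real.exp (a * k) * Real.exp (-b * |(k : ℝ)|) / c := by
      rw [aux_neg a b c]; ring
    rw [step, ← Summable.tsum_add h₂ h₁]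
    refine tsum_congr fun k => ?_
    rw [Real.cosh_eq, neg_mul]
    ring
  have hsum : ∀ a : ℝ, |a| < b →
      Summable (fun k : ℤ => 2 * Real.cosh (a * k) * (Real.exp (-b * |(k : ℝ)|) / c)) := by
    intro a ha
    have h₁ := aux_summable (a := a) (b := b) c ha
    have h₂ := aux_summable (a := -a) (b := b) c (by rwa [abs_neg])
    refine (h₁.add h₂).congr fun k => ?_
    rw [Real.cosh_eq, neg_mul]
    ring
  have hlt : (∑' k : ℤ, 2 * Real.cosh (a₁ * k) * (Real.exp (-b * |(k : ℝ)|) / c))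
      < ∑' k : ℤ, 2 * Real.cosh (a₂ * k) * (Real.exp (-b * |(k : ℝ)|) / c) := by
    refine Summable.tsum_lt_tsum (i := (1 : ℤ)) (fun k => ?_) ?_ (hsum a₁ e1) (hsum a₂ e2)
    · have hck : Real.cosh (a₁ * k) ≤ Real.cosh (a₂ * k) := by
        refine Real.cosh_le_cosh.mpr ?_
        rw [abs_mul, abs_mul]
        exact mul_le_mul_of_nonneg_right habs.le (abs_nonneg _)
      have hE : 0 < Real.exp (-b * |(k : ℝ)|) / c := by positivity
      nlinarith [Real.cosh_pos (x := a₁ * (k : ℝ))]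
    · have hck : Real.cosh (a₁ * ((1 : ℤ) : ℝ)) < Real.cosh (a₂ * ((1 : ℤ) : ℝ)) := by
        refine Real.cosh_lt_cosh.mpr ?_
        push_cast
        rw [mul_one, mul_one]
        exact habs
      have hE : 0 < Real.exp (-b * |((1 : ℤ) : ℝ)|) / c := by positivity
      nlinarith [mul_pos (sub_pos.mpr hck) hE]
  have k1 := key a₁ e1
  have k2 := key a₂ e2
  linarith

lemma aux_continuousOn {b c m : ℝ} (hm : m < b) (hc : 0 < c) :
    ContinuousOn (fun a : ℝ => ∑' k : ℤ, Real.exp (a * k) * Real.exp (-b * |(k : ℝ)|) / c)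
      (Icc (-m) m) := by
  refine continuousOn_tsum (u := fun k : ℤ => Real.exp ((m - b) * |(k : ℝ)|) / c)
    (fun k => ?_) ((aux_summable_exp (by linarith)).div_const c) (fun k x hx => ?_)
  · exact (((Real.continuous_exp.comp (continuous_id.mul continuous_const)).mul
      continuous_const).div_const c).continuousOn
  · rw [Real.norm_of_nonneg (by positivity)]
    have hxm : |x| ≤ m := abs_le.mpr ⟨hx.1, hx.2⟩
    rw [div_le_div_iff_of_pos_right hc, ← Real.exp_add]
    apply Real.exp_le_exp.mpr
    have h1 : x * k ≤ |x| * |(k : ℝ)| := (le_abs_self _).trans (by rw [abs_mul])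
    nlinarith [abs_nonneg (k : ℝ)]

lemma aux_tsum_pi_pow (g : ℤ → ℝ≥0∞) (n : ℕ) :
    ∑' v : (Fin n → ℤ), ∏ i, g (v i) = (∑' m : ℤ, g m) ^ n := by
  induction n with
  | zero =>
    rw [pow_zero, tsum_eq_single (default : Fin 0 → ℤ)
      (fun b hb => absurd (Subsingleton.elim b default) hb)]
    simp
  | succ n ih =>
    rw [← (Fin.consEquiv (fun _ : Fin (n + 1) => ℤ)).tsum_eq (fun v => ∏ i, g (v i))]
    have hterm : ∀ p : ℤ × (Fin n → ℤ),
        (∏ i, g (((Fin.consEquiv (fun _ : Fin (n + 1) => ℤ)) p) i)) = g p.1 * ∏ i, g (p.2 i) := by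
      intro p
      rw [Fin.prod_univ_succ]
      simp [Fin.consEquiv]
    rw [tsum_congr hterm, ENNReal.tsum_prod']
    simp_rw [ENNReal.tsum_mul_left, ENNReal.tsum_mul_right]
    rw [ih, pow_succ]; ring

private def extFn {n : ℕ} (v : Fin n → ℤ) (i : ℕ) : ℤ := if h : i < n then v ⟨i, h⟩ else 0

private lemma extFn_coe {n : ℕ} (v : Fin n → ℤ) (i : Fin n) : extFn v (i : ℕ) = v i := by
  rw [extFn, dif_pos i.isLt, Fin.eta]

lemma aux_meas_eq_tsum {Ω : Type*} [MeasurableSpace Ω] (ν : Measure Ω)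
    (U : ℕ → Ω → ℤ) (hmeas : ∀ i, Measurable (U i))
    (hind : iIndepFun U ν) (n : ℕ) (R : (Fin n → ℤ) → Prop) :
    ν {ω | R (fun i : Fin n => U i ω)}
      = ∑' v : (Fin n → ℤ),
          Set.indicator {v | R v} (fun v => ∏ i : Fin n, ν (U (i : ℕ) ⁻¹' {v i})) v := by
  classical
  have hCmeas : ∀ v : Fin n → ℤ,
      MeasurableSet (⋂ i ∈ Finset.range n, U i ⁻¹' {extFn v i}) := fun v =>
    Finset.measurableSet_biInter _ fun i _ => hmeas i (measurableSet_singleton _)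
  have hC : ∀ (ω : Ω) (v : Fin n → ℤ),
      ω ∈ (⋂ i ∈ Finset.range n, U i ⁻¹' {extFn v i}) ↔ (fun i : Fin n => U i ω) = v := by
    intro ω v
    simp only [Set.mem_iInter, Set.mem_preimage, Set.mem_singleton_iff, Finset.mem_range]
    constructor
    · intro h
      funext i
      have h2 := h i i.isLt
      rwa [extFn_coe] at h2
    · intro h i hi
      have : extFn v (((⟨i, hi⟩ : Fin n) : ℕ)) = v ⟨i, hi⟩ := extFn_coe v ⟨i, hi⟩
      rw [this]
      exact congrFun h ⟨i, hi⟩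
  have hDval : ∀ v : Fin n → ℤ,
      ({ω | R (fun i : Fin n => U i ω)} ∩ ⋂ i ∈ Finset.range n, U i ⁻¹' {extFn v i})
        = if R v then (⋂ i ∈ Finset.range n, U i ⁻¹' {extFn v i}) else ∅ := by
    intro v
    by_cases hR : R v
    · rw [if_pos hR]
      ext ω
      refine ⟨fun h => h.2, fun h => ⟨?_, h⟩⟩
      simp only [Set.mem_setOf_eq, (hC ω v).mp h]
      exact hR
    · rw [if_neg hR]
      ext ω
      simp only [Set.mem_inter_iff, Set.mem_setOf_eq, Set.mem_empty_iff_false, iff_false,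
        not_and]
      intro hRω hCω
      exact hR ((hC ω v).mp hCω ▸ hRω)
  have hcover : {ω | R (fun i : Fin n => U i ω)}
      = ⋃ v : Fin n → ℤ,
          ({ω | R (fun i : Fin n => U i ω)} ∩ ⋂ i ∈ Finset.range n, U i ⁻¹' {extFn v i}) := by
    ext ω
    simp only [Set.mem_iUnion, Set.mem_inter_iff]
    constructor
    · intro h
      exact ⟨fun i => U i ω, h, (hC ω _).mpr rfl⟩
    · rintro ⟨v, h, -⟩
      exact h
  have hdisj : Pairwise (Function.onFun Disjoint (fun v : Fin n → ℤ =>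
      {ω | R (fun i : Fin n => U i ω)} ∩ ⋂ i ∈ Finset.range n, U i ⁻¹' {extFn v i})) := by
    intro v v' hvv'
    refine Set.disjoint_left.mpr fun ω h1 h2 => hvv' ?_
    rw [← (hC ω v).mp h1.2, ← (hC ω v').mp h2.2]
  have hCmu : ∀ v : Fin n → ℤ,
      ν (⋂ i ∈ Finset.range n, U i ⁻¹' {extFn v i})
        = ∏ i : Fin n, ν (U (i : ℕ) ⁻¹' {v i}) := by
    intro v
    rw [hind.measure_inter_preimage_eq_mul (Finset.range n)
      (sets := fun i => {extFn v i}) (fun i _ => measurableSet_singleton _)]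
    rw [← Fin.prod_univ_eq_prod_range (fun i => ν (U i ⁻¹' {extFn v i})) n]
    exact Finset.prod_congr rfl fun i _ => by rw [extFn_coe]
  rw [hcover, measure_iUnion hdisj (fun v => by
    rw [hDval v]
    split
    · exact hCmeas v
    · exact MeasurableSet.empty)]
  refine tsum_congr fun v => ?_
  rw [hDval v]
  by_cases hR : R v
  · rw [if_pos hR, Set.indicator_of_mem (show v ∈ {v | R v} from hR), hCmu v]
  · rw [if_neg hR, Set.indicator_of_notMem (show v ∉ {v | R v} from hR), measure_empty]

theorem kappa_uniform_convergence (β : ℝ) (hβ : 0 < β)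
    (c : ℝ) (hc : c = ∑' k : ℤ, Real.exp (-(β / 2) * |(k : ℝ)|))
    (L : ℝ → ℝ)
    (hL : ∀ h : ℝ, L h =
      Real.log (∑' k : ℤ, Real.exp (h * k) * Real.exp (-(β / 2) * |(k : ℝ)|) / c))
    {Ω : Type*} [MeasurableSpace Ω] (μ : ℝ → Measure Ω)
    (hprob : ∀ x ∈ Ioo (0:ℝ) (β / 2), IsProbabilityMeasure (μ x))
    (U : ℕ → Ω → ℤ) (hmeas : ∀ i, Measurable (U i))
    (hindep : ∀ x ∈ Ioo (0:ℝ) (β / 2), iIndepFun U (μ x))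
    (hlaw : ∀ x ∈ Ioo (0:ℝ) (β / 2), ∀ i : ℕ, ∀ k : ℤ,
      μ x {ω | U i ω = k} =
        ENNReal.ofReal (Real.exp (x * k - L x) * (Real.exp (-(β / 2) * |(k : ℝ)|) / c)))
    (X : ℕ → Ω → ℤ) (hX : ∀ n ω, X n ω = ∑ i ∈ Finset.range n, U i ω)
    (P : ℕ → ℝ → ℝ)
    (hP : ∀ k : ℕ, ∀ x : ℝ,
      P k x = (μ x {ω | ∀ i : ℕ, 1 ≤ i → i ≤ k → 0 < X i ω}).toReal)
    (κ : ℝ → ℝ)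
    (hκ : ∀ x : ℝ, κ x = (μ x {ω | ∀ i : ℕ, 1 ≤ i → 0 < X i ω}).toReal) :
    (∀ x₁ x₂ : ℝ, 0 < x₁ → x₁ ≤ x₂ → x₂ < β / 2 →
      (∃ r > 0, ∀ x ∈ Icc x₁ x₂, ∀ k : ℕ,
        0 ≤ P k x - κ x ∧
        P k x - κ x ≤ ∑' j : ℕ, Real.exp (-r * ((k : ℝ) + 1 + j))) ∧
      TendstoUniformlyOn (fun k x => P k x) κ atTop (Icc x₁ x₂)) ∧
    ContinuousOn κ (Ioo (0:ℝ) (β / 2)) := by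
  classical
  have hc0 : 0 < c := by
    rw [hc]
    refine Summable.tsum_pos (aux_summable_exp (t := -(β/2)) (by linarith)) (fun k => (Real.exp_pos _).le)
      0 (Real.exp_pos _)
  have hb2 : 0 < β / 2 := by linarith
  -- S-related facts
  have hSpos : ∀ a : ℝ, |a| < β / 2 →
      0 < ∑' k : ℤ, Real.exp (a * k) * Real.exp (-(β / 2) * |(k : ℝ)|) / c :=
    fun a ha => aux_pos ha hc0
  have hLS : ∀ a : ℝ, |a| < β / 2 →
      Real.exp (L a) = ∑' k : ℤ, Real.exp (a * k) * Real.exp (-(β / 2) * |(k : ℝ)|) / c :=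
    fun a ha => by rw [hL a]; exact Real.exp_log (hSpos a ha)
  have key : ∀ x₁ x₂ : ℝ, 0 < x₁ → x₁ ≤ x₂ → x₂ < β / 2 →
      ((∃ r > 0, ∀ x ∈ Icc x₁ x₂, ∀ k : ℕ,
          0 ≤ P k x - κ x ∧
          P k x - κ x ≤ ∑' j : ℕ, Real.exp (-r * ((k : ℝ) + 1 + j))) ∧
        TendstoUniformlyOn (fun k x => P k x) κ atTop (Icc x₁ x₂)) ∧
      ContinuousOn κ (Icc x₁ x₂) := by
    intro x₁ x₂ hx₁ h12 hx₂
    have hx₂0 : 0 < x₂ := lt_of_lt_of_le hx₁ h12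
    have hsub : Icc x₁ x₂ ⊆ Ioo (0:ℝ) (β / 2) := fun x hx =>
      ⟨lt_of_lt_of_le hx₁ hx.1, lt_of_le_of_lt hx.2 hx₂⟩
    have hSconts : ContinuousOn
        (fun a : ℝ => ∑' k : ℤ, Real.exp (a * k) * Real.exp (-(β / 2) * |(k : ℝ)|) / c)
        (Icc (-x₂) x₂) := aux_continuousOn hx₂ hc0
    have habs2 : ∀ y ∈ Icc x₁ x₂, |y| < β / 2 := fun y hy => by
      rw [abs_of_pos (lt_of_lt_of_le hx₁ hy.1)]
      linarith [hy.2]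
    have habs1 : ∀ y ∈ Icc x₁ x₂, |y - x₁ / 2| < β / 2 := fun y hy => by
      rw [abs_of_nonneg (by linarith [hy.1])]
      linarith [hy.2]
    have hφcont : ContinuousOn
        (fun y : ℝ => (∑' k : ℤ, Real.exp ((y - x₁ / 2) * k) * Real.exp (-(β / 2) * |(k : ℝ)|) / c) / (∑' k : ℤ, Real.exp ((y) * k) * Real.exp (-(β / 2) * |(k : ℝ)|) / c)) (Icc x₁ x₂) := by
      apply ContinuousOn.div
      · exact hSconts.comp (continuousOn_id.sub continuousOn_const)
          (fun y hy => Set.mem_Icc.mpr ⟨by linarith [hy.1, hy.2], by linarith [hy.1, hy.2]⟩)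
      · exact hSconts.comp continuousOn_id
          (fun y hy => Set.mem_Icc.mpr ⟨by linarith [hy.1], hy.2⟩)
      · intro y hy
        exact ne_of_gt (hSpos y (habs2 y hy))
    obtain ⟨z, hzmem, hzmax⟩ := isCompact_Icc.exists_isMaxOn (Set.nonempty_Icc.mpr h12) hφcont
    obtain ⟨ρ, hρpos, hρlt1, hρmax⟩ : ∃ ρ : ℝ, 0 < ρ ∧ ρ < 1 ∧
        ∀ x ∈ Icc x₁ x₂, (∑' k : ℤ, Real.exp ((x - x₁ / 2) * k) * Real.exp (-(β / 2) * |(k : ℝ)|) / c) / (∑' k : ℤ, Real.exp ((x) * k) * Real.exp (-(β / 2) * |(k : ℝ)|) / c) ≤ ρ := by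
      refine ⟨_, ?_, ?_, fun x hx => hzmax hx⟩
      · exact div_pos (hSpos _ (habs1 z hzmem)) (hSpos _ (habs2 z hzmem))
      · rw [div_lt_one (hSpos _ (habs2 z hzmem))]
        exact aux_strict_mono (by linarith [hzmem.1]) (by linarith) (by linarith [hzmem.2]) hc0
    obtain ⟨r, hr0, hρr⟩ : ∃ r : ℝ, 0 < r ∧ Real.exp (-r) = ρ :=
      ⟨-Real.log ρ, by simpa using Real.log_neg hρpos hρlt1, by rw [neg_neg, Real.exp_log hρpos]⟩
    have hXmeas : ∀ i, Measurable (X i) := by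
      intro i
      have : X i = fun ω => ∑ j ∈ Finset.range i, U j ω := funext (hX i)
      rw [this]
      exact Finset.measurable_sum _ (fun j _ => hmeas j)
    have chern : ∀ x ∈ Icc x₁ x₂, ∀ j : ℕ,
        μ x {ω | X j ω ≤ 0} ≤ ENNReal.ofReal (Real.exp (-r * j)) := by
      intro x hx j
      have hxIoo : x ∈ Ioo (0:ℝ) (β / 2) := hsub hx
      have hpoint : ∀ m : ℤ, Real.exp (-(x₁ / 2) * m)
            * (Real.exp (x * m - L x) * (Real.exp (-(β / 2) * |(m : ℝ)|) / c))
          = Real.exp (-(L x))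
            * (Real.exp ((x - x₁ / 2) * m) * Real.exp (-(β / 2) * |(m : ℝ)|) / c) := by
        intro m
        have e1 : Real.exp (x * m - L x)
            = Real.exp ((x - x₁ / 2) * m) * Real.exp ((x₁ / 2) * m) * Real.exp (-(L x)) := by
          rw [← Real.exp_add, ← Real.exp_add]
          congr 1
          ring
        have hBB : Real.exp (-(x₁ / 2) * (m : ℝ)) * Real.exp ((x₁ / 2) * m) = 1 := by
          rw [← Real.exp_add]
          norm_num
        rw [e1]
        linear_combination (Real.exp ((x - x₁ / 2) * m) * Real.exp (-(L x))
          * (Real.exp (-(β / 2) * |(m : ℝ)|) / c)) * hBB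
      have hsummable : Summable (fun m : ℤ => Real.exp (-(x₁ / 2) * m)
          * (Real.exp (x * m - L x) * (Real.exp (-(β / 2) * |(m : ℝ)|) / c))) :=
        Summable.congr ((aux_summable c (habs1 x hx)).mul_left (Real.exp (-(L x))))
          fun m => (hpoint m).symm
      have hmoment : (∑' m : ℤ, ENNReal.ofReal (Real.exp (-(x₁ / 2) * m)
            * (Real.exp (x * m - L x) * (Real.exp (-(β / 2) * |(m : ℝ)|) / c))))
          ≤ ENNReal.ofReal ρ := by
        rw [← ENNReal.ofReal_tsum_of_nonneg (fun m => by positivity) hsummable]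
        apply ENNReal.ofReal_le_ofReal
        calc (∑' m : ℤ, Real.exp (-(x₁ / 2) * m)
              * (Real.exp (x * m - L x) * (Real.exp (-(β / 2) * |(m : ℝ)|) / c)))
            = Real.exp (-(L x))
              * ∑' m : ℤ, Real.exp ((x - x₁ / 2) * m) * Real.exp (-(β / 2) * |(m : ℝ)|) / c := by
              rw [tsum_congr hpoint, tsum_mul_left]
          _ = (∑' m : ℤ, Real.exp ((x - x₁ / 2) * m) * Real.exp (-(β / 2) * |(m : ℝ)|) / c)
              / ∑' m : ℤ, Real.exp (x * m) * Real.exp (-(β / 2) * |(m : ℝ)|) / c := by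
              rw [Real.exp_neg, hLS x (habs2 x hx)]
              rw [inv_mul_eq_div]
          _ ≤ ρ := hρmax x hx
      have hev : {ω | X j ω ≤ 0}
          = {ω | (fun v : Fin j → ℤ => (∑ i, v i) ≤ 0) (fun i : Fin j => U (i : ℕ) ω)} := by
        ext ω
        simp only [Set.mem_setOf_eq, hX j ω, ← Fin.sum_univ_eq_sum_range]
      have hfib : ∀ (i : ℕ) (m : ℤ), U i ⁻¹' {m} = {ω | U i ω = m} := fun i m => rfl
      rw [hev, aux_meas_eq_tsum (μ x) U hmeas (hindep x hxIoo) j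
        (fun v : Fin j → ℤ => (∑ i, v i) ≤ 0)]
      calc (∑' v : (Fin j → ℤ), Set.indicator {v : Fin j → ℤ | (∑ i, v i) ≤ 0}
              (fun v => ∏ i : Fin j, μ x (U (i : ℕ) ⁻¹' {v i})) v)
          ≤ ∑' v : (Fin j → ℤ), ∏ i : Fin j, ENNReal.ofReal (Real.exp (-(x₁ / 2) * (v i))
              * (Real.exp (x * (v i) - L x) * (Real.exp (-(β / 2) * |((v i : ℤ) : ℝ)|) / c))) := by
            refine ENNReal.tsum_le_tsum fun v => ?_
            by_cases hR : (∑ i, v i) ≤ 0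
            · rw [Set.indicator_of_mem (show v ∈ {v : Fin j → ℤ | (∑ i, v i) ≤ 0} from hR)]
              rw [Finset.prod_congr rfl (fun i _ => by rw [hfib, hlaw x hxIoo i (v i)])]
              rw [← ENNReal.ofReal_prod_of_nonneg (fun i _ => by positivity),
                ← ENNReal.ofReal_prod_of_nonneg (fun i _ => by positivity)]
              apply ENNReal.ofReal_le_ofReal
              conv_rhs => rw [Finset.prod_mul_distrib]
              have hprodexp : (∏ i : Fin j, Real.exp (-(x₁ / 2) * ((v i : ℤ) : ℝ)))
                  = Real.exp (-(x₁ / 2) * ∑ i : Fin j, ((v i : ℤ) : ℝ)) := by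
                rw [← Real.exp_sum]
                congr 1
                rw [Finset.mul_sum]
              have hsle : (∑ i : Fin j, ((v i : ℤ) : ℝ)) ≤ 0 := by
                have : ((∑ i, v i : ℤ) : ℝ) ≤ 0 := by exact_mod_cast hR
                push_cast at this
                exact this
              have h1 : (1:ℝ) ≤ Real.exp (-(x₁ / 2) * ∑ i : Fin j, ((v i : ℤ) : ℝ)) :=
                Real.one_le_exp (by nlinarith)
              rw [hprodexp]
              exact le_mul_of_one_le_left
                (Finset.prod_nonneg fun i _ => by positivity) h1
            · rw [Set.indicator_of_notMem
                (show v ∉ {v : Fin j → ℤ | (∑ i, v i) ≤ 0} from hR)]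
              exact zero_le
        _ = (∑' m : ℤ, ENNReal.ofReal (Real.exp (-(x₁ / 2) * m)
              * (Real.exp (x * m - L x) * (Real.exp (-(β / 2) * |(m : ℝ)|) / c)))) ^ j :=
            aux_tsum_pi_pow (fun m : ℤ => ENNReal.ofReal (Real.exp (-(x₁ / 2) * m)
              * (Real.exp (x * m - L x) * (Real.exp (-(β / 2) * |(m : ℝ)|) / c)))) j
        _ ≤ (ENNReal.ofReal ρ) ^ j := pow_le_pow_left' hmoment j
        _ = ENNReal.ofReal (Real.exp (-r * j)) := by
            rw [← hρr, ← ENNReal.ofReal_pow (Real.exp_nonneg _), ← Real.exp_nat_mul]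
            congr 2
            ring
    have hbound : ∀ x ∈ Icc x₁ x₂, ∀ k : ℕ,
        0 ≤ P k x - κ x ∧
        P k x - κ x ≤ ∑' j : ℕ, Real.exp (-r * ((k : ℝ) + 1 + j)) := by
      intro x hx k
      have hxIoo : x ∈ Ioo (0:ℝ) (β / 2) := hsub hx
      haveI := hprob x hxIoo
      have hBmeas : MeasurableSet {ω | ∀ i : ℕ, 1 ≤ i → 0 < X i ω} := by
        have hBi : {ω | ∀ i : ℕ, 1 ≤ i → 0 < X i ω}
            = ⋂ (i : ℕ), ⋂ (_ : 1 ≤ i), {ω | 0 < X i ω} := by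
          ext ω
          simp only [Set.mem_iInter, Set.mem_setOf_eq]
        rw [hBi]
        exact MeasurableSet.iInter fun i => MeasurableSet.iInter fun _ =>
          hXmeas i (show MeasurableSet {z : ℤ | 0 < z} from trivial)
      have hsubAB : {ω | ∀ i : ℕ, 1 ≤ i → 0 < X i ω}
          ⊆ {ω | ∀ i : ℕ, 1 ≤ i → i ≤ k → 0 < X i ω} := fun ω h i h1 _ => h i h1
      have hdiffeq : P k x - κ x
          = (μ x ({ω | ∀ i : ℕ, 1 ≤ i → i ≤ k → 0 < X i ω}
              \ {ω | ∀ i : ℕ, 1 ≤ i → 0 < X i ω})).toReal := by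
        rw [hP, hκ, ← ENNReal.toReal_sub_of_le (measure_mono hsubAB) (measure_ne_top _ _),
          ← measure_diff hsubAB hBmeas.nullMeasurableSet (measure_ne_top _ _)]
      refine ⟨by rw [hdiffeq]; exact ENNReal.toReal_nonneg, ?_⟩
      rw [hdiffeq]
      have hincl : ({ω | ∀ i : ℕ, 1 ≤ i → i ≤ k → 0 < X i ω}
            \ {ω | ∀ i : ℕ, 1 ≤ i → 0 < X i ω})
          ⊆ ⋃ n : ℕ, {ω | X (k + 1 + n) ω ≤ 0} := by
        rintro ω ⟨hA, hB⟩
        simp only [Set.mem_setOf_eq] at hA hB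
        push_neg at hB
        obtain ⟨i, h1, hle⟩ := hB
        have hki : k + 1 ≤ i := by
          by_contra hki
          push_neg at hki
          exact absurd (hA i h1 (by omega)) (not_lt.mpr hle)
        refine Set.mem_iUnion.mpr ⟨i - (k + 1), ?_⟩
        simp only [Set.mem_setOf_eq]
        rw [show k + 1 + (i - (k + 1)) = i from by omega]
        exact hle
      have hsummable : Summable (fun n : ℕ => Real.exp (-r * ((k : ℝ) + 1 + n))) := by
        refine Summable.congr (Summable.mul_left (Real.exp (-r * ((k : ℝ) + 1)))
          (summable_geometric_of_lt_one (Real.exp_nonneg (-r))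
            (Real.exp_lt_one_iff.mpr (by linarith)))) fun n => ?_
        rw [← Real.exp_nat_mul, ← Real.exp_add]
        congr 1
        ring
      calc (μ x ({ω | ∀ i : ℕ, 1 ≤ i → i ≤ k → 0 < X i ω}
              \ {ω | ∀ i : ℕ, 1 ≤ i → 0 < X i ω})).toReal
          ≤ (ENNReal.ofReal (∑' n : ℕ, Real.exp (-r * ((k : ℝ) + 1 + n)))).toReal := by
            apply ENNReal.toReal_mono ENNReal.ofReal_ne_top
            calc μ x ({ω | ∀ i : ℕ, 1 ≤ i → i ≤ k → 0 < X i ω}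
                    \ {ω | ∀ i : ℕ, 1 ≤ i → 0 < X i ω})
                ≤ ∑' n : ℕ, μ x {ω | X (k + 1 + n) ω ≤ 0} :=
                  (measure_mono hincl).trans (measure_iUnion_le _)
              _ ≤ ∑' n : ℕ, ENNReal.ofReal (Real.exp (-r * ((k : ℝ) + 1 + n))) := by
                  refine ENNReal.tsum_le_tsum fun n => le_trans (chern x hx (k + 1 + n)) ?_
                  apply le_of_eq
                  congr 1
                  push_cast
                  ring
              _ = ENNReal.ofReal (∑' n : ℕ, Real.exp (-r * ((k : ℝ) + 1 + n))) :=
                  (ENNReal.ofReal_tsum_of_nonneg (fun n => Real.exp_nonneg _) hsummable).symm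
        _ = ∑' n : ℕ, Real.exp (-r * ((k : ℝ) + 1 + n)) :=
            ENNReal.toReal_ofReal (tsum_nonneg fun n => Real.exp_nonneg _)
    have hTU : TendstoUniformlyOn (fun k x => P k x) κ atTop (Icc x₁ x₂) := by
      rw [Metric.tendstoUniformlyOn_iff]
      intro ε hε
      have hq1 : Real.exp (-r) < 1 := Real.exp_lt_one_iff.mpr (by linarith)
      have hT : Tendsto (fun k : ℕ => Real.exp (-r * ((k : ℝ) + 1))
          * ∑' n : ℕ, Real.exp (-r) ^ n) atTop (nhds 0) := by
        rw [show (0:ℝ) = 0 * ∑' n : ℕ, Real.exp (-r) ^ n from (zero_mul _).symm]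
        apply Tendsto.mul_const
        have hpow : Tendsto (fun k : ℕ => Real.exp (-r) ^ (k + 1)) atTop (nhds 0) :=
          (tendsto_pow_atTop_nhds_zero_of_lt_one (Real.exp_nonneg _) hq1).comp
            (tendsto_add_atTop_nat 1)
        refine hpow.congr fun k => ?_
        rw [← Real.exp_nat_mul]
        congr 1
        push_cast
        ring
      have hev := hT.eventually (gt_mem_nhds hε)
      filter_upwards [hev] with k hk x hx
      have hTkeq : (∑' j : ℕ, Real.exp (-r * ((k : ℝ) + 1 + j)))
          = Real.exp (-r * ((k : ℝ) + 1)) * ∑' n : ℕ, Real.exp (-r) ^ n := by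
        rw [← tsum_mul_left]
        refine tsum_congr fun n => ?_
        rw [← Real.exp_nat_mul, ← Real.exp_add]
        congr 1
        ring
      rw [Real.dist_eq, abs_sub_comm, abs_of_nonneg (hbound x hx k).1]
      exact lt_of_le_of_lt ((hbound x hx k).2.trans (le_of_eq hTkeq)) hk
    have hPcont : ∀ k : ℕ, ContinuousOn (fun x => P k x) (Icc x₁ x₂) := by
      intro k
      have hIccsub : Icc x₁ x₂ ⊆ Icc (-x₂) x₂ := fun y hy =>
        Set.mem_Icc.mpr ⟨by linarith [hy.1], hy.2⟩
      have hLcont : ContinuousOn L (Icc x₁ x₂) := by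
        refine ContinuousOn.congr (ContinuousOn.log (hSconts.mono hIccsub)
          (fun y hy => ne_of_gt (hSpos y (habs2 y hy)))) (fun y _ => hL y)
      have hPeq : ∀ x ∈ Icc x₁ x₂, P k x = ∑' v : (Fin k → ℤ),
          Set.indicator {v : Fin k → ℤ |
              ∀ i : ℕ, 1 ≤ i → i ≤ k → 0 < ∑ j ∈ Finset.range i, extFn v j}
            (fun v => ∏ i : Fin k,
              Real.exp (x * (v i) - L x) * (Real.exp (-(β / 2) * |((v i : ℤ) : ℝ)|) / c)) v := by
        intro x hx
        have hxIoo : x ∈ Ioo (0:ℝ) (β / 2) := hsub hx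
        haveI := hprob x hxIoo
        have hA : {ω | ∀ i : ℕ, 1 ≤ i → i ≤ k → 0 < X i ω}
            = {ω | (fun v : Fin k → ℤ =>
                ∀ i : ℕ, 1 ≤ i → i ≤ k → 0 < ∑ j ∈ Finset.range i, extFn v j)
                (fun i : Fin k => U (i : ℕ) ω)} := by
          ext ω
          simp only [Set.mem_setOf_eq]
          have hXv : ∀ i : ℕ, i ≤ k →
              (∑ j ∈ Finset.range i, extFn (fun t : Fin k => U (t : ℕ) ω) j) = X i ω := by
            intro i hik
            rw [hX i ω]
            refine Finset.sum_congr rfl fun j hj => ?_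
            have hjk : j < k := lt_of_lt_of_le (Finset.mem_range.mp hj) hik
            rw [extFn, dif_pos hjk]
          constructor
          · intro h i h1 h2
            rw [hXv i h2]
            exact h i h1 h2
          · intro h i h1 h2
            have h3 := h i h1 h2
            rwa [hXv i h2] at h3
        rw [hP, hA, aux_meas_eq_tsum (μ x) U hmeas (hindep x hxIoo) k
          (fun v : Fin k → ℤ => ∀ i : ℕ, 1 ≤ i → i ≤ k → 0 < ∑ j ∈ Finset.range i, extFn v j)]
        rw [ENNReal.tsum_toReal_eq (fun v => ?_)]
        · refine tsum_congr fun v => ?_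
          by_cases hv : v ∈ {v : Fin k → ℤ |
              ∀ i : ℕ, 1 ≤ i → i ≤ k → 0 < ∑ j ∈ Finset.range i, extFn v j}
          · rw [Set.indicator_of_mem hv, Set.indicator_of_mem hv,
              Finset.prod_congr rfl (fun i _ => by
                rw [show U (i : ℕ) ⁻¹' {v i} = {ω | U (i : ℕ) ω = v i} from rfl,
                  hlaw x hxIoo i (v i)]),
              ← ENNReal.ofReal_prod_of_nonneg (fun i _ => by positivity),
              ENNReal.toReal_ofReal (Finset.prod_nonneg fun i _ => by positivity)]
          · rw [Set.indicator_of_notMem hv, Set.indicator_of_notMem hv, ENNReal.toReal_zero]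
        · by_cases hv : v ∈ {v : Fin k → ℤ |
              ∀ i : ℕ, 1 ≤ i → i ≤ k → 0 < ∑ j ∈ Finset.range i, extFn v j}
          · rw [Set.indicator_of_mem hv]
            exact ENNReal.prod_ne_top fun i _ => measure_ne_top _ _
          · rw [Set.indicator_of_notMem hv]
            exact ENNReal.zero_ne_top
      refine ContinuousOn.congr ?_ (fun x hx => hPeq x hx)
      refine continuousOn_tsum (u := fun v : Fin k → ℤ =>
        ∏ i : Fin k, Real.exp ((x₂ - β / 2) * |((v i : ℤ) : ℝ)|)) (fun v => ?_) ?_ ?_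
      · by_cases hv : v ∈ {v : Fin k → ℤ |
            ∀ i : ℕ, 1 ≤ i → i ≤ k → 0 < ∑ j ∈ Finset.range i, extFn v j}
        · refine ContinuousOn.congr (f := fun x => ∏ i : Fin k,
            Real.exp (x * (v i) - L x) * (Real.exp (-(β / 2) * |((v i : ℤ) : ℝ)|) / c))
            ?_ (fun x _ => Set.indicator_of_mem hv _)
          refine continuousOn_finset_prod _ fun i _ => ?_
          exact (Real.continuous_exp.comp_continuousOn
            ((continuousOn_id.mul continuousOn_const).sub hLcont)).mul continuousOn_const
        · exact ContinuousOn.congr continuousOn_const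
            (fun x _ => Set.indicator_of_notMem hv _)
      · have hfin : (∑' v : (Fin k → ℤ),
            ∏ i : Fin k, ENNReal.ofReal (Real.exp ((x₂ - β / 2) * |((v i : ℤ) : ℝ)|))) ≠ ⊤ := by
          rw [aux_tsum_pi_pow (fun m : ℤ =>
            ENNReal.ofReal (Real.exp ((x₂ - β / 2) * |(m : ℝ)|))) k]
          refine ENNReal.pow_ne_top ?_
          rw [← ENNReal.ofReal_tsum_of_nonneg (fun m => Real.exp_nonneg _)
            (aux_summable_exp (by linarith))]
          exact ENNReal.ofReal_ne_top
        refine Summable.congr (ENNReal.summable_toReal hfin) fun v => ?_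
        rw [← ENNReal.ofReal_prod_of_nonneg (fun i _ => Real.exp_nonneg _),
          ENNReal.toReal_ofReal (Finset.prod_nonneg fun i _ => Real.exp_nonneg _)]
      · intro v x hx
        by_cases hv : v ∈ {v : Fin k → ℤ |
            ∀ i : ℕ, 1 ≤ i → i ≤ k → 0 < ∑ j ∈ Finset.range i, extFn v j}
        · rw [Set.indicator_of_mem hv,
            Real.norm_of_nonneg (Finset.prod_nonneg fun i _ => by positivity)]
          refine Finset.prod_le_prod (fun i _ => by positivity) (fun i _ => ?_)
          have hx0 : 0 < x := lt_of_lt_of_le hx₁ hx.1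
          have hterm : (1:ℝ) / c ≤ ∑' m : ℤ,
              Real.exp (x * m) * Real.exp (-(β / 2) * |(m : ℝ)|) / c := by
            have h0 := Summable.le_tsum (aux_summable c (habs2 x hx)) 0 (fun m _ => by positivity)
            simpa using h0
          have hLlb : -Real.log c ≤ L x := by
            rw [hL x]
            calc -Real.log c = Real.log (1 / c) := by
                  rw [Real.log_div one_ne_zero (ne_of_gt hc0), Real.log_one]
                  ring
              _ ≤ _ := (Real.log_le_log_iff (by positivity) (hSpos x (habs2 x hx))).mpr hterm
          have hxm : x * ((v i : ℤ) : ℝ) ≤ x₂ * |((v i : ℤ) : ℝ)| := by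
            have h1 : x * ((v i : ℤ) : ℝ) ≤ x * |((v i : ℤ) : ℝ)| :=
              mul_le_mul_of_nonneg_left (le_abs_self _) hx0.le
            have h2 : x * |((v i : ℤ) : ℝ)| ≤ x₂ * |((v i : ℤ) : ℝ)| :=
              mul_le_mul_of_nonneg_right hx.2 (abs_nonneg _)
            linarith
          have final : Real.exp (x * (v i) - L x) * Real.exp (-(β / 2) * |((v i : ℤ) : ℝ)|)
              ≤ Real.exp ((x₂ - β / 2) * |((v i : ℤ) : ℝ)|) * c := by
            rw [← Real.exp_add]
            calc Real.exp (x * (v i) - L x + -(β / 2) * |((v i : ℤ) : ℝ)|)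
                ≤ Real.exp ((x₂ - β / 2) * |((v i : ℤ) : ℝ)| + Real.log c) :=
                  Real.exp_le_exp.mpr (by nlinarith [hxm, hLlb])
              _ = Real.exp ((x₂ - β / 2) * |((v i : ℤ) : ℝ)|) * c := by
                  rw [Real.exp_add, Real.exp_log hc0]
          calc Real.exp (x * (v i) - L x) * (Real.exp (-(β / 2) * |((v i : ℤ) : ℝ)|) / c)
              = Real.exp (x * (v i) - L x) * Real.exp (-(β / 2) * |((v i : ℤ) : ℝ)|) / c := by
                ring
            _ ≤ Real.exp ((x₂ - β / 2) * |((v i : ℤ) : ℝ)|) := (div_le_iff₀ hc0).mpr final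
        · rw [Set.indicator_of_notMem hv, norm_zero]
          positivity
    exact ⟨⟨⟨r, hr0, hbound⟩, hTU⟩, hTU.continuousOn (Filter.Eventually.of_forall hPcont).frequently⟩

  refine ⟨fun x₁ x₂ h1 h2 h3 => (key x₁ x₂ h1 h2 h3).1, ?_⟩
  intro x₀ hx₀
  obtain ⟨hx₀0, hx₀2⟩ := hx₀
  have h1 : (0:ℝ) < x₀ / 2 := by linarith
  have h2 : x₀ / 2 ≤ (x₀ + β / 2) / 2 := by linarith
  have h3 : (x₀ + β / 2) / 2 < β / 2 := by linarith
  have hcont := (key (x₀ / 2) ((x₀ + β / 2) / 2) h1 h2 h3).2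
  have hmem : Icc (x₀ / 2) ((x₀ + β / 2) / 2) ∈ nhds x₀ :=
    Icc_mem_nhds (by linarith) (by linarith)
  exact ((hcont.continuousAt hmem).continuousWithinAt)
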